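/- Consider a finite-horizon MDP with value functions defined by the Bellman recursions V̄_h(s|R) = max_a { R_h(s,a) + Σ_{s'} P_h(s'|s,a) V̄_{h+1}(s'|R) } with V̄_{H+1} = 0, where R is a random nonnegative reward with E[R_h(s,a)] = r_h(s,a), and V⁰_h(s) = max_a { r_h(s,a) + Σ_{s'} P_h(s'|s,a) V⁰_{h+1}(s') } with V⁰_{H+1} = 0. Then for all h ∈ [H+1] and all states s, E[V̄_h(s|R)] ≤ A^{H+1-h} · V⁰_h(s), where A is the number of actions. -/
import Mathlib


open MeasureTheory

/-- Bellman comparison: in a finite-horizon MDP with nonnegative random rewards `R`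
(with expectations `r`), the full-lookahead Bellman values `V̄_h(s|R)` and the
no-lookahead Bellman values `V⁰_h(s)` satisfy
`E[V̄_h(s|R)] ≤ A^{H+1-h} · V⁰_h(s)` for all `h ∈ [H+1]` and all states `s`. -/
theorem expected_lookahead_value_le_card_pow_mul_value
    {S A : Type} [Fintype S] [Fintype A] [Nonempty S] [Nonempty A]
    {Ω : Type} [MeasureSpace Ω] [IsProbabilityMeasure (volume : Measure Ω)]
    (H : ℕ) (P : ℕ → S → A → S → ℝ)
    (hP : ∀ h s a, (∀ s', 0 ≤ P h s a s') ∧ ∑ s', P h s a s' = 1)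
    (R : ℕ → S → A → Ω → ℝ) (hRnn : ∀ h s a ω, 0 ≤ R h s a ω)
    (hRint : ∀ h s a, Integrable (R h s a))
    (r : ℕ → S → A → ℝ) (hr : ∀ h s a, r h s a = ∫ ω, R h s a ω)
    (Vbar : ℕ → S → Ω → ℝ) (V0 : ℕ → S → ℝ)
    (hVbarInt : ∀ h s, Integrable (Vbar h s))
    (hVbarTop : ∀ s ω, Vbar (H + 1) s ω = 0)
    (hVbarRec : ∀ h, 1 ≤ h → h ≤ H → ∀ s ω,
      Vbar h s ω = ⨆ a, (R h s a ω + ∑ s', P h s a s' * Vbar (h + 1) s' ω))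
    (hV0Top : ∀ s, V0 (H + 1) s = 0)
    (hV0Rec : ∀ h, 1 ≤ h → h ≤ H → ∀ s,
      V0 h s = ⨆ a, (r h s a + ∑ s', P h s a s' * V0 (h + 1) s')) :
    ∀ h, 1 ≤ h → h ≤ H + 1 → ∀ s,
      (∫ ω, Vbar h s ω) ≤ (Fintype.card A : ℝ) ^ (H + 1 - h) * V0 h s := by
  -- nonnegativity of Vbar
  have hVnn : ∀ d h, 1 ≤ h → h + d = H + 1 → ∀ s ω, 0 ≤ Vbar h s ω := by
    intro d
    induction d with
    | zero =>
      intro h h1 he s ω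
      have : h = H + 1 := by omega
      rw [this, hVbarTop]
    | succ d ih =>
      intro h h1 he s ω
      rw [hVbarRec h h1 (by omega)]
      have ih' := ih (h + 1) (by omega) (by omega)
      obtain ⟨a⟩ := ‹Nonempty A›
      refine le_ciSup_of_le ((Set.finite_range _).bddAbove) a ?_
      exact add_nonneg (hRnn h s a ω)
        (Finset.sum_nonneg fun s' _ => mul_nonneg ((hP h s a).1 s') (ih' s' ω))
  have hrnn : ∀ h s a, 0 ≤ r h s a := by
    intro h s a; rw [hr]; exact integral_nonneg (fun ω => hRnn h s a ω)
  have hcard : (1 : ℝ) ≤ (Fintype.card A : ℝ) := by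
    exact_mod_cast Fintype.card_pos
  suffices key : ∀ d h, 1 ≤ h → h + d = H + 1 → ∀ s,
      (∫ ω, Vbar h s ω) ≤ (Fintype.card A : ℝ) ^ d * V0 h s by
    intro h h1 h2 s
    have := key (H + 1 - h) h h1 (by omega) s
    simpa using this
  intro d
  induction d with
  | zero =>
    intro h h1 he s
    have : h = H + 1 := by omega
    subst this
    simp [hVbarTop, hV0Top]
  | succ d ih =>
    intro h h1 he s
    have hhH : h ≤ H := by omega
    have ih' := ih (h + 1) (by omega) (by omega)
    set C : ℝ := (Fintype.card A : ℝ) ^ d with hC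
    have hC1 : (1 : ℝ) ≤ C := one_le_pow₀ hcard
    have hC0 : (0 : ℝ) ≤ C := le_trans zero_le_one hC1
    -- integrability of the per-action integrand
    have hintSum : ∀ a : A, Integrable
        (fun ω => ∑ s', P h s a s' * Vbar (h + 1) s' ω) := by
      intro a
      exact integrable_finset_sum _ fun s' _ => (hVbarInt (h + 1) s').const_mul _
    have hintX : ∀ a : A, Integrable
        (fun ω => R h s a ω + ∑ s', P h s a s' * Vbar (h + 1) s' ω) := by
      intro a
      exact (hRint h s a).add (hintSum a)
    -- step 1: sup ≤ sum pointwise, integrate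
    have step1 : (∫ ω, Vbar h s ω) ≤
        ∫ ω, ∑ a, (R h s a ω + ∑ s', P h s a s' * Vbar (h + 1) s' ω) := by
      refine integral_mono (hVbarInt h s) (integrable_finset_sum _ fun a _ => hintX a) ?_
      intro ω
      rw [hVbarRec h h1 hhH s ω]
      refine ciSup_le fun a => Finset.single_le_sum (f := fun a =>
        R h s a ω + ∑ s', P h s a s' * Vbar (h + 1) s' ω) ?_ (Finset.mem_univ a)
      intro b _
      exact add_nonneg (hRnn h s b ω)
        (Finset.sum_nonneg fun s' _ => mul_nonneg ((hP h s b).1 s')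
          (hVnn d (h + 1) (by omega) (by omega) s' ω))
    -- step 2: swap integral and sums
    have step2 : (∫ ω, ∑ a, (R h s a ω + ∑ s', P h s a s' * Vbar (h + 1) s' ω)) =
        ∑ a, (r h s a + ∑ s', P h s a s' * ∫ ω, Vbar (h + 1) s' ω) := by
      rw [integral_finset_sum _ fun a _ => hintX a]
      refine Finset.sum_congr rfl fun a _ => ?_
      rw [integral_add (hRint h s a) (hintSum a), ← hr,
        integral_finset_sum _ fun s' _ => (hVbarInt (h + 1) s').const_mul _]
      congr 1
      exact Finset.sum_congr rfl fun s' _ => integral_const_mul _ _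
    -- step 3: bound each term by C * (r + ∑ P V0) ≤ C * V0 h
    have step3 : ∀ a : A,
        r h s a + ∑ s', P h s a s' * ∫ ω, Vbar (h + 1) s' ω ≤ C * V0 h s := by
      intro a
      have t1 : r h s a + ∑ s', P h s a s' * ∫ ω, Vbar (h + 1) s' ω ≤
          C * (r h s a + ∑ s', P h s a s' * V0 (h + 1) s') := by
        rw [mul_add, mul_comm C (r h s a)]
        refine add_le_add (le_mul_of_one_le_right (hrnn h s a) hC1) ?_
        rw [Finset.mul_sum]
        refine Finset.sum_le_sum fun s' _ => ?_
        rw [mul_left_comm]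
        exact mul_le_mul_of_nonneg_left (ih' s') ((hP h s a).1 s')
      refine t1.trans (mul_le_mul_of_nonneg_left ?_ hC0)
      rw [hV0Rec h h1 hhH s]
      exact le_ciSup (f := fun a => r h s a + ∑ s', P h s a s' * V0 (h + 1) s') ((Set.finite_range _).bddAbove) a
    calc (∫ ω, Vbar h s ω)
        ≤ ∑ a : A, (r h s a + ∑ s', P h s a s' * ∫ ω, Vbar (h + 1) s' ω) := by
          rw [← step2]; exact step1
      _ ≤ ∑ _a : A, C * V0 h s := Finset.sum_le_sum fun a _ => step3 a
      _ = (Fintype.card A : ℝ) ^ (d + 1) * V0 h s := by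
          rw [Finset.sum_const, nsmul_eq_mul, pow_succ, Finset.card_univ]
          ring
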